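/- Let a ∈ B^{n-k,k} and b ∈ B_a^{n-k,k}. Then the intersection S_a ∩ S_b ⊆ (S²)^n is homeomorphic to (S²)^c, where c is the number of circle components of the one-manifold aw(b). -/

import Mathlib

/-- A noncrossing matching of type `(n-k, k)`: `k` pairwise-noncrossing arcs above a
horizontal line of `n` vertices (labelled `1,…,n`); the remaining `n-2k` vertices carry
rays, and no ray lies beneath an arc (every vertex strictly between the endpoints of an
arc is an endpoint of some arc). -/
structure NCMatching (n k : ℕ) where
  arcs : Finset (ℕ × ℕ)
  card_arcs : arcs.card = k
  mem_range : ∀ p ∈ arcs, 1 ≤ p.1 ∧ p.1 < p.2 ∧ p.2 ≤ n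
  endpoints_distinct : ∀ p ∈ arcs, ∀ q ∈ arcs, p ≠ q →
    p.1 ≠ q.1 ∧ p.1 ≠ q.2 ∧ p.2 ≠ q.1 ∧ p.2 ≠ q.2
  noncross : ∀ p ∈ arcs, ∀ q ∈ arcs, ¬ (p.1 < q.1 ∧ q.1 < p.2 ∧ p.2 < q.2)
  no_ray_under : ∀ p ∈ arcs, ∀ r, p.1 < r → r < p.2 → ∃ q ∈ arcs, r = q.1 ∨ r = q.2

/-- Vertex `i` carries a ray of the matching `m`. -/
def NCMatching.IsRay {n k : ℕ} (m : NCMatching n k) (i : ℕ) : Prop :=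
  1 ≤ i ∧ i ≤ n ∧ ∀ p ∈ m.arcs, p.1 ≠ i ∧ p.2 ≠ i

-- unique arc through a vertex
lemma arc_unique {n k : ℕ} (m : NCMatching n k) {p q : ℕ × ℕ} (hp : p ∈ m.arcs)
    (hq : q ∈ m.arcs) {r : ℕ} (hpr : r = p.1 ∨ r = p.2) (hqr : r = q.1 ∨ r = q.2) :
    p = q := by
  by_contra h
  obtain ⟨h1, h2, h3, h4⟩ := m.endpoints_distinct p hp q hq h
  rcases hpr with rfl | rfl <;> rcases hqr with h' | h' <;> omega

open Classical in
noncomputable def partnerFn {n k : ℕ} (m : NCMatching n k) (r : ℕ) : ℕ :=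
  if h : ∃ q ∈ m.arcs, r = q.1 ∨ r = q.2 then
    (if r = h.choose.1 then h.choose.2 else h.choose.1) else r

lemma partner_eq_right {n k : ℕ} (m : NCMatching n k) {p : ℕ × ℕ} (hp : p ∈ m.arcs) :
    partnerFn m p.1 = p.2 := by
  have hex : ∃ q ∈ m.arcs, p.1 = q.1 ∨ p.1 = q.2 := ⟨p, hp, Or.inl rfl⟩
  rw [partnerFn, dif_pos hex]
  obtain ⟨hq, hqr⟩ := hex.choose_spec
  have : p = hex.choose := arc_unique m hp hq (Or.inl rfl) hqr
  rw [← this, if_pos rfl]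

lemma partner_eq_left {n k : ℕ} (m : NCMatching n k) {p : ℕ × ℕ} (hp : p ∈ m.arcs) :
    partnerFn m p.2 = p.1 := by
  have hex : ∃ q ∈ m.arcs, p.2 = q.1 ∨ p.2 = q.2 := ⟨p, hp, Or.inr rfl⟩
  rw [partnerFn, dif_pos hex]
  obtain ⟨hq, hqr⟩ := hex.choose_spec
  have he : p = hex.choose := arc_unique m hp hq (Or.inr rfl) hqr
  have hlt := (m.mem_range p hp).2.1
  rw [← he, if_neg (by omega)]

lemma partner_of_ray {n k : ℕ} (m : NCMatching n k) {r : ℕ}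
    (h : ∀ p ∈ m.arcs, p.1 ≠ r ∧ p.2 ≠ r) : partnerFn m r = r := by
  rw [partnerFn, dif_neg]
  rintro ⟨q, hq, hr | hr⟩
  · exact (h q hq).1 hr.symm
  · exact (h q hq).2 hr.symm

lemma even_card_of_invol (ι : ℕ → ℕ) (s : Finset ℕ)
    (h1 : ∀ r ∈ s, ι r ∈ s) (h2 : ∀ r ∈ s, ι (ι r) = r) (h3 : ∀ r ∈ s, ι r ≠ r) :
    Even s.card := by
  induction s using Finset.strongInduction with
  | _ s ih =>
    rcases s.eq_empty_or_nonempty with rfl | ⟨r, hr⟩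
    · simp
    · have hsub : {r, ι r} ⊆ s := by
        intro x hx; simp at hx; rcases hx with rfl | rfl; exacts [hr, h1 r hr]
      have hcard2 : ({r, ι r} : Finset ℕ).card = 2 := by
        rw [Finset.card_insert_of_notMem (by simp [(h3 r hr).symm]), Finset.card_singleton]
      have hss : s \ {r, ι r} ⊂ s := by
        apply Finset.sdiff_ssubset hsub; simp
      have h1' : ∀ x ∈ s \ {r, ι r}, ι x ∈ s \ {r, ι r} := by
        intro x hx
        rw [Finset.mem_sdiff] at hx ⊢
        obtain ⟨hxs, hxm⟩ := hx
        simp only [Finset.mem_insert, Finset.mem_singleton] at hxm ⊢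
        push_neg at hxm ⊢
        refine ⟨h1 x hxs, ?_, ?_⟩
        · intro h'; apply hxm.2; rw [← h', h2 x hxs]
        · intro h'; apply hxm.1
          have := congrArg ι h'
          rwa [h2 x hxs, h2 r hr] at this
      have hev := ih _ hss (fun x hx => h1' x hx)
        (fun x hx => h2 x (Finset.mem_sdiff.mp hx).1)
        (fun x hx => h3 x (Finset.mem_sdiff.mp hx).1)
      have hc : (s \ {r, ι r}).card = s.card - 2 := by
        rw [Finset.card_sdiff_of_subset hsub, hcard2]
      have hle : 2 ≤ s.card := hcard2 ▸ Finset.card_le_card hsub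
      rw [hc] at hev
      rw [Nat.even_iff] at hev ⊢
      omega

lemma partner_Ioo {n k : ℕ} (m : NCMatching n k) {p : ℕ × ℕ} (hp : p ∈ m.arcs) {r : ℕ}
    (hr : r ∈ Finset.Ioo p.1 p.2) :
    partnerFn m r ∈ Finset.Ioo p.1 p.2 ∧ partnerFn m (partnerFn m r) = r ∧
      partnerFn m r ≠ r := by
  rw [Finset.mem_Ioo] at hr
  obtain ⟨q, hq, hrq⟩ := m.no_ray_under p hp r hr.1 hr.2
  have hqlt := (m.mem_range q hq).2.1
  have hnpq : q ≠ p := by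
    rintro rfl; rcases hrq with rfl | rfl <;> omega
  have hd := m.endpoints_distinct p hp q hq (Ne.symm hnpq)
  have hnc1 := m.noncross p hp q hq
  have hnc2 := m.noncross q hq p hp
  rcases hrq with rfl | rfl
  · have h1 : partnerFn m q.1 = q.2 := partner_eq_right m hq
    have h2 : partnerFn m q.2 = q.1 := partner_eq_left m hq
    refine ⟨?_, by rw [h1, h2], by omega⟩
    rw [h1, Finset.mem_Ioo]
    omega
  · have h1 : partnerFn m q.2 = q.1 := partner_eq_left m hq
    have h2 : partnerFn m q.1 = q.2 := partner_eq_right m hq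
    refine ⟨?_, by rw [h1, h2], by omega⟩
    rw [h1, Finset.mem_Ioo]
    omega

lemma arc_parity {n k : ℕ} (m : NCMatching n k) {p : ℕ × ℕ} (hp : p ∈ m.arcs) :
    p.1 % 2 ≠ p.2 % 2 := by
  have hlt := (m.mem_range p hp).2.1
  have key : Even (Finset.Ioo p.1 p.2).card :=
    even_card_of_invol (partnerFn m) _
      (fun r hr => (partner_Ioo m hp hr).1)
      (fun r hr => (partner_Ioo m hp hr).2.1)
      (fun r hr => (partner_Ioo m hp hr).2.2)
  rw [Nat.card_Ioo, Nat.even_iff] at key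
  omega

/-- The adjacency relation on vertices coming from the glued one-manifold `a w(b)`:
two vertices are related if an arc of `a` or an arc of (the reflection of) `b` joins them. -/
def glueRel {n k : ℕ} (a b : NCMatching n k) (i j : ℕ) : Prop :=
  (i, j) ∈ a.arcs ∨ (j, i) ∈ a.arcs ∨ (i, j) ∈ b.arcs ∨ (j, i) ∈ b.arcs

/-- Two vertices lie on the same connected component of `a w(b)`. -/
def Conn {n k : ℕ} (a b : NCMatching n k) : ℕ → ℕ → Prop :=
  Relation.ReflTransGen (glueRel a b)

/-- `b ∈ B_a^{n-k,k}`: every line segment of `a w(b)` has endpoints pointing in opposite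
directions, i.e. no component of `a w(b)` contains two distinct rays of `a`, nor two
distinct rays of `b`. -/
def InBa {n k : ℕ} (a b : NCMatching n k) : Prop :=
  (∀ i j, a.IsRay i → a.IsRay j → i ≠ j → ¬ Conn a b i j) ∧
  (∀ i j, b.IsRay i → b.IsRay j → i ≠ j → ¬ Conn a b i j)

noncomputable def flowF {n k : ℕ} (a b : NCMatching n k) (w : ℕ) : ℕ :=
  if w % 2 = 1 then partnerFn a w else partnerFn b w

noncomputable def flowG {n k : ℕ} (a b : NCMatching n k) (w : ℕ) : ℕ :=
  if w % 2 = 1 then partnerFn b w else partnerFn a w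

lemma step_flowF {n k : ℕ} {a b : NCMatching n k} {z z' : ℕ} (h : glueRel a b z z') :
    z' = flowF a b z ∨ z = flowF a b z' := by
  rcases h with h | h | h | h
  · have hpar := arc_parity a h
    have h1 : partnerFn a z = z' := partner_eq_right a h
    have h2 : partnerFn a z' = z := partner_eq_left a h
    rcases Nat.mod_two_eq_zero_or_one z with hz | hz
    · right; rw [flowF, if_pos (by omega), h2]
    · left; rw [flowF, if_pos hz, h1]
  · have hpar := arc_parity a h
    have h1 : partnerFn a z' = z := partner_eq_right a h
    have h2 : partnerFn a z = z' := partner_eq_left a h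
    rcases Nat.mod_two_eq_zero_or_one z with hz | hz
    · right; rw [flowF, if_pos (by omega), h1]
    · left; rw [flowF, if_pos hz, h2]
  · have hpar := arc_parity b h
    have h1 : partnerFn b z = z' := partner_eq_right b h
    have h2 : partnerFn b z' = z := partner_eq_left b h
    rcases Nat.mod_two_eq_zero_or_one z with hz | hz
    · left; rw [flowF, if_neg (by omega), h1]
    · right; rw [flowF, if_neg (by omega), h2]
  · have hpar := arc_parity b h
    have h1 : partnerFn b z' = z := partner_eq_right b h
    have h2 : partnerFn b z = z' := partner_eq_left b h
    rcases Nat.mod_two_eq_zero_or_one z with hz | hz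
    · left; rw [flowF, if_neg (by omega), h2]
    · right; rw [flowF, if_neg (by omega), h1]

lemma step_flowG {n k : ℕ} {a b : NCMatching n k} {z z' : ℕ} (h : glueRel a b z z') :
    z' = flowG a b z ∨ z = flowG a b z' := by
  rcases h with h | h | h | h
  · have hpar := arc_parity a h
    have h1 : partnerFn a z = z' := partner_eq_right a h
    have h2 : partnerFn a z' = z := partner_eq_left a h
    rcases Nat.mod_two_eq_zero_or_one z with hz | hz
    · left; rw [flowG, if_neg (by omega), h1]
    · right; rw [flowG, if_neg (by omega), h2]
  · have hpar := arc_parity a h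
    have h1 : partnerFn a z' = z := partner_eq_right a h
    have h2 : partnerFn a z = z' := partner_eq_left a h
    rcases Nat.mod_two_eq_zero_or_one z with hz | hz
    · left; rw [flowG, if_neg (by omega), h2]
    · right; rw [flowG, if_neg (by omega), h1]
  · have hpar := arc_parity b h
    have h1 : partnerFn b z = z' := partner_eq_right b h
    have h2 : partnerFn b z' = z := partner_eq_left b h
    rcases Nat.mod_two_eq_zero_or_one z with hz | hz
    · right; rw [flowG, if_pos (by omega), h2]
    · left; rw [flowG, if_pos hz, h1]
  · have hpar := arc_parity b h
    have h1 : partnerFn b z' = z := partner_eq_right b h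
    have h2 : partnerFn b z = z' := partner_eq_left b h
    rcases Nat.mod_two_eq_zero_or_one z with hz | hz
    · right; rw [flowG, if_pos (by omega), h1]
    · left; rw [flowG, if_pos hz, h2]

lemma sink_reach {n k : ℕ} {a b : NCMatching n k} (f : ℕ → ℕ)
    (hstep : ∀ z z', glueRel a b z z' → z' = f z ∨ z = f z')
    {x y : ℕ} (hx : f x = x) (h : Conn a b x y) : ∃ m, f^[m] y = x := by
  induction h with
  | refl => exact ⟨0, rfl⟩
  | tail h1 h2 ih =>
    obtain ⟨m, hm⟩ := ih
    rcases hstep _ _ h2 with h' | h'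
    · cases m with
      | zero =>
        simp only [Function.iterate_zero, id_eq] at hm
        subst hm
        exact ⟨0, by simp [h', hx]⟩
      | succ m' =>
        refine ⟨m', ?_⟩
        rw [h']
        rw [Function.iterate_succ_apply] at hm
        exact hm
    · exact ⟨m + 1, by rw [Function.iterate_succ_apply, ← h', hm]⟩

lemma fixed_conn_eq {n k : ℕ} {a b : NCMatching n k} (f : ℕ → ℕ)
    (hstep : ∀ z z', glueRel a b z z' → z' = f z ∨ z = f z')
    {x y : ℕ} (hx : f x = x) (hy : f y = y) (h : Conn a b x y) : x = y := by
  obtain ⟨m, hm⟩ := sink_reach f hstep hx h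
  rw [Function.iterate_fixed hy] at hm
  omega

lemma ray_partner {n k : ℕ} {m : NCMatching n k} {x : ℕ} (h : m.IsRay x) :
    partnerFn m x = x := partner_of_ray m h.2.2

lemma ray_parity_ab {n k : ℕ} {a b : NCMatching n k} {x y : ℕ}
    (hx : a.IsRay x) (hy : b.IsRay y) (hc : Conn a b x y) : x % 2 = y % 2 := by
  by_contra hne
  rcases Nat.mod_two_eq_zero_or_one x with hx2 | hx2
  · -- x even : x is flowG-fixed, y must be even too, but y odd gives flowG-fixed
    have hy2 : y % 2 = 1 := by omega
    have h1 : flowG a b x = x := by rw [flowG, if_neg (by omega)]; exact ray_partner hx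
    have h2 : flowG a b y = y := by rw [flowG, if_pos hy2]; exact ray_partner hy
    have := fixed_conn_eq _ (fun _ _ h => step_flowG h) h1 h2 hc
    omega
  · have hy2 : y % 2 = 0 := by omega
    have h1 : flowF a b x = x := by rw [flowF, if_pos hx2]; exact ray_partner hx
    have h2 : flowF a b y = y := by rw [flowF, if_neg (by omega)]; exact ray_partner hy
    have := fixed_conn_eq _ (fun _ _ h => step_flowF h) h1 h2 hc
    omega

lemma glueRel_symm {n k : ℕ} {a b : NCMatching n k} : Symmetric (glueRel a b) := by
  intro i j h; unfold glueRel at *; tauto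

lemma conn_symm {n k : ℕ} {a b : NCMatching n k} {x y : ℕ} (h : Conn a b x y) :
    Conn a b y x := by
  haveI : Std.Symm (glueRel a b) := ⟨glueRel_symm⟩
  exact Relation.ReflTransGen.symmetric.symm _ _ h

lemma ray_parity {n k : ℕ} {a b : NCMatching n k} (hab : InBa a b) {x y : ℕ}
    (hc : Conn a b x y)
    (hx : a.IsRay x ∨ b.IsRay x) (hy : a.IsRay y ∨ b.IsRay y) : x % 2 = y % 2 := by
  rcases hx with hx | hx <;> rcases hy with hy | hy
  · by_contra hne
    exact hab.1 x y hx hy (by omega) hc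
  · exact ray_parity_ab hx hy hc
  · exact (ray_parity_ab hy hx (conn_symm hc)).symm
  · by_contra hne
    exact hab.2 x y hx hy (by omega) hc

/-- The north pole `p = (0,0,1)` of the unit two-sphere in `ℝ³`. -/
noncomputable def np : EuclideanSpace ℝ (Fin 3) := WithLp.toLp 2 ![0, 0, 1]

/-- The component `S_m ⊆ (S²)^n` of a matching `m`: each coordinate lies on the unit
sphere, coordinates agree along the arcs of `m`, and the coordinate at a ray vertex `i`
equals `(-1)^i p` (the vertex `i : Fin n` has label `i+1`). -/
def SComp {n k : ℕ} (m : NCMatching n k) : Set (Fin n → EuclideanSpace ℝ (Fin 3)) :=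
  {x | (∀ i, ‖x i‖ = 1) ∧
    (∀ p ∈ m.arcs, ∀ i j : Fin n, (i : ℕ) + 1 = p.1 → (j : ℕ) + 1 = p.2 → x i = x j) ∧
    (∀ i : Fin n, m.IsRay ((i : ℕ) + 1) → x i = ((-1 : ℝ) ^ ((i : ℕ) + 1)) • np)}

/-- The glue relation transported to `Fin n` (the vertex `i : Fin n` has label `i+1`). -/
def glueRelF {n k : ℕ} (a b : NCMatching n k) (i j : Fin n) : Prop :=
  glueRel a b ((i : ℕ) + 1) ((j : ℕ) + 1)

/-- A component of `a w(b)` is a circle when none of its vertices carries a ray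
of `a` or of `b`. -/
def IsCircleClass {n k : ℕ} (a b : NCMatching n k) (q : Quot (glueRelF a b)) : Prop :=
  ∀ i : Fin n, Quot.mk _ i = q → ¬ a.IsRay ((i : ℕ) + 1) ∧ ¬ b.IsRay ((i : ℕ) + 1)

/-- The number of circle components of the glued one-manifold `a w(b)`. -/
noncomputable def circles {n k : ℕ} (a b : NCMatching n k) : ℕ :=
  Nat.card {q : Quot (glueRelF a b) // IsCircleClass a b q}

lemma eqvGen_to_rtg {α : Type*} {r : α → α → Prop} (hs : Symmetric r) {x y : α}
    (h : Relation.EqvGen r x y) : Relation.ReflTransGen r x y := by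
  induction h with
  | rel _ _ h => exact Relation.ReflTransGen.single h
  | refl => exact Relation.ReflTransGen.refl
  | symm _ _ _ ih => haveI : Std.Symm r := ⟨hs⟩; exact Relation.ReflTransGen.symmetric.symm _ _ ih
  | trans _ _ _ _ _ ih1 ih2 => exact ih1.trans ih2

lemma glueRelF_symm {n k : ℕ} {a b : NCMatching n k} : Symmetric (glueRelF a b) :=
  fun _ _ h => glueRel_symm h

lemma quot_eq_rtg {n k : ℕ} {a b : NCMatching n k} {i j : Fin n}
    (h : Quot.mk (glueRelF a b) i = Quot.mk (glueRelF a b) j) :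
    Relation.ReflTransGen (glueRelF a b) i j :=
  eqvGen_to_rtg glueRelF_symm (Quot.eq.mp h)

lemma quot_eq_conn {n k : ℕ} {a b : NCMatching n k} {i j : Fin n}
    (h : Quot.mk (glueRelF a b) i = Quot.mk (glueRelF a b) j) :
    Conn a b ((i : ℕ) + 1) ((j : ℕ) + 1) :=
  Relation.ReflTransGen.lift (fun i : Fin n => (i : ℕ) + 1) (fun _ _ h => h) _ _ (quot_eq_rtg h)

lemma const_on_rtg {n k : ℕ} {a b : NCMatching n k}
    {x : Fin n → EuclideanSpace ℝ (Fin 3)} (hxa : x ∈ SComp a) (hxb : x ∈ SComp b)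
    {i j : Fin n} (h : Relation.ReflTransGen (glueRelF a b) i j) :
    x i = x j := by
  induction h with
  | refl => rfl
  | tail h1 h2 ih =>
    refine ih.trans ?_
    rcases h2 with h' | h' | h' | h'
    · exact hxa.2.1 _ h' _ _ rfl rfl
    · exact (hxa.2.1 _ h' _ _ rfl rfl).symm
    · exact hxb.2.1 _ h' _ _ rfl rfl
    · exact (hxb.2.1 _ h' _ _ rfl rfl).symm

lemma const_on_class {n k : ℕ} {a b : NCMatching n k}
    {x : Fin n → EuclideanSpace ℝ (Fin 3)} (hxa : x ∈ SComp a) (hxb : x ∈ SComp b)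
    {i j : Fin n} (h : Quot.mk (glueRelF a b) i = Quot.mk (glueRelF a b) j) :
    x i = x j := const_on_rtg hxa hxb (quot_eq_rtg h)

lemma norm_np : ‖np‖ = 1 := by
  rw [show np = EuclideanSpace.single (2 : Fin 3) (1 : ℝ) by
    ext i; fin_cases i <;> simp [np, EuclideanSpace.single]]
  simp

noncomputable def circEquiv {n k : ℕ} (a b : NCMatching n k) :
    {q : Quot (glueRelF a b) // IsCircleClass a b q} ≃ Fin (circles a b) :=
  Finite.equivFinOfCardEq rfl

open Classical in
noncomputable def lineVal {n k : ℕ} (a b : NCMatching n k) (q : Quot (glueRelF a b)) :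
    EuclideanSpace ℝ (Fin 3) :=
  if h : ∃ i : Fin n, Quot.mk _ i = q ∧ (a.IsRay ((i : ℕ) + 1) ∨ b.IsRay ((i : ℕ) + 1))
  then ((-1 : ℝ) ^ ((h.choose : ℕ) + 1)) • np else 0

open Classical in
noncomputable def classVal {n k : ℕ} (a b : NCMatching n k) (q : Quot (glueRelF a b)) :
    (Fin (circles a b) → ↥(Metric.sphere (0 : EuclideanSpace ℝ (Fin 3)) 1)) →
      EuclideanSpace ℝ (Fin 3) :=
  if h : IsCircleClass a b q then
    (fun y => (y (circEquiv a b ⟨q, h⟩) : EuclideanSpace ℝ (Fin 3)))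
  else fun _ => lineVal a b q

lemma neg_one_pow_congr_mod {m m' : ℕ} (h : m % 2 = m' % 2) :
    ((-1 : ℝ)) ^ m = (-1 : ℝ) ^ m' := by
  rcases Nat.even_or_odd m with he | ho
  · have he' : Even m' := by rw [Nat.even_iff] at he ⊢; omega
    rw [he.neg_one_pow, he'.neg_one_pow]
  · have ho' : Odd m' := by rw [Nat.odd_iff] at ho ⊢; omega
    rw [ho.neg_one_pow, ho'.neg_one_pow]

lemma lineVal_eq {n k : ℕ} {a b : NCMatching n k} (hab : InBa a b)
    {q : Quot (glueRelF a b)} {i : Fin n} (hi : Quot.mk _ i = q)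
    (hr : a.IsRay ((i : ℕ) + 1) ∨ b.IsRay ((i : ℕ) + 1)) :
    lineVal a b q = ((-1 : ℝ) ^ ((i : ℕ) + 1)) • np := by
  have hex : ∃ j : Fin n, Quot.mk _ j = q ∧ (a.IsRay ((j : ℕ) + 1) ∨ b.IsRay ((j : ℕ) + 1)) :=
    ⟨i, hi, hr⟩
  rw [lineVal, dif_pos hex]
  obtain ⟨hjq, hjr⟩ := hex.choose_spec
  have hconn : Conn a b ((hex.choose : ℕ) + 1) ((i : ℕ) + 1) :=
    quot_eq_conn (hjq.trans hi.symm)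
  rw [neg_one_pow_congr_mod (ray_parity hab hconn hjr hr)]

lemma not_circle_exists {n k : ℕ} {a b : NCMatching n k} {q : Quot (glueRelF a b)}
    (h : ¬ IsCircleClass a b q) :
    ∃ i : Fin n, Quot.mk _ i = q ∧ (a.IsRay ((i : ℕ) + 1) ∨ b.IsRay ((i : ℕ) + 1)) := by
  unfold IsCircleClass at h
  push_neg at h
  obtain ⟨i, hi, hr⟩ := h
  exact ⟨i, hi, by tauto⟩

lemma lineVal_norm {n k : ℕ} {a b : NCMatching n k} (hab : InBa a b)
    {q : Quot (glueRelF a b)} (h : ¬ IsCircleClass a b q) : ‖lineVal a b q‖ = 1 := by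
  obtain ⟨i, hi, hr⟩ := not_circle_exists h
  rw [lineVal_eq hab hi hr, norm_smul]
  simp [norm_np]

lemma classVal_circle {n k : ℕ} {a b : NCMatching n k} {q : Quot (glueRelF a b)}
    (h : IsCircleClass a b q) (y : Fin (circles a b) → ↥(Metric.sphere (0 : EuclideanSpace ℝ (Fin 3)) 1)) :
    classVal a b q y = (y (circEquiv a b ⟨q, h⟩) : EuclideanSpace ℝ (Fin 3)) := by
  rw [classVal, dif_pos h]

lemma classVal_line {n k : ℕ} {a b : NCMatching n k} {q : Quot (glueRelF a b)}
    (h : ¬ IsCircleClass a b q) (y : Fin (circles a b) → ↥(Metric.sphere (0 : EuclideanSpace ℝ (Fin 3)) 1)) :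
    classVal a b q y = lineVal a b q := by
  rw [classVal, dif_neg h]

lemma continuous_classVal {n k : ℕ} (a b : NCMatching n k) (q : Quot (glueRelF a b)) :
    Continuous (classVal a b q) := by
  rw [classVal]
  split_ifs with h
  · exact continuous_subtype_val.comp (continuous_apply _)
  · exact continuous_const

/-- For `b ∈ B_a^{n-k,k}` the intersection `S_a ∩ S_b ⊆ (S²)^n` is homeomorphic to
`(S²)^c`, where `c` is the number of circle components of `a w(b)`. -/
theorem intersection_homeo_sphere_power (n k : ℕ) (a b : NCMatching n k) (hab : InBa a b) :
    Nonempty ((↥(SComp a ∩ SComp b)) ≃ₜ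
      (Fin (circles a b) → ↥(Metric.sphere (0 : EuclideanSpace ℝ (Fin 3)) 1))) := by
  classical
  set e := circEquiv a b with he
  -- ray vertices give non-circle classes
  have hnc : ∀ i : Fin n, (a.IsRay ((i : ℕ) + 1) ∨ b.IsRay ((i : ℕ) + 1)) →
      ¬ IsCircleClass a b (Quot.mk _ i) := by
    intro i hr hc
    rcases hr with h | h
    · exact (hc i rfl).1 h
    · exact (hc i rfl).2 h
  have hray_val : ∀ x ∈ SComp a ∩ SComp b, ∀ i : Fin n,
      (a.IsRay ((i : ℕ) + 1) ∨ b.IsRay ((i : ℕ) + 1)) →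
      x i = ((-1 : ℝ) ^ ((i : ℕ) + 1)) • np := by
    intro x hx i hr
    rcases hr with h | h
    · exact hx.1.2.2 i h
    · exact hx.2.2.2 i h
  -- forward map
  set F : ↥(SComp a ∩ SComp b) →
      (Fin (circles a b) → ↥(Metric.sphere (0 : EuclideanSpace ℝ (Fin 3)) 1)) :=
    fun x t => ⟨x.1 (Quot.out ((e.symm t) : {q : Quot (glueRelF a b) // IsCircleClass a b q}).1),
      by rw [mem_sphere_zero_iff_norm]; exact x.2.1.1 _⟩ with hF
  -- backward map
  have hGmem : ∀ y : Fin (circles a b) → ↥(Metric.sphere (0 : EuclideanSpace ℝ (Fin 3)) 1),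
      (fun i : Fin n => classVal a b (Quot.mk _ i) y) ∈ SComp a ∩ SComp b := by
    intro y
    have hnorm : ∀ i : Fin n, ‖classVal a b (Quot.mk _ i) y‖ = 1 := by
      intro i
      by_cases h : IsCircleClass a b (Quot.mk (glueRelF a b) i)
      · rw [classVal_circle h]
        exact mem_sphere_zero_iff_norm.mp (y _).2
      · rw [classVal_line h]
        exact lineVal_norm hab h
    have harc : ∀ (i j : Fin n), glueRelF a b i j →
        classVal a b (Quot.mk _ i) y = classVal a b (Quot.mk _ j) y := by
      intro i j hg
      exact congrArg (fun q => classVal a b q y) (Quot.sound hg)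
    have hrayv : ∀ i : Fin n, (a.IsRay ((i : ℕ) + 1) ∨ b.IsRay ((i : ℕ) + 1)) →
        classVal a b (Quot.mk _ i) y = ((-1 : ℝ) ^ ((i : ℕ) + 1)) • np := by
      intro i hr
      rw [classVal_line (hnc i hr), lineVal_eq hab rfl hr]
    constructor
    · refine ⟨hnorm, ?_, ?_⟩
      · intro p hp i j hi hj
        refine harc i j (Or.inl ?_)
        have hpe : ((i : ℕ) + 1, (j : ℕ) + 1) = p := by rw [hi, hj]
        rwa [hpe]
      · intro i hi
        exact hrayv i (Or.inl hi)
    · refine ⟨hnorm, ?_, ?_⟩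
      · intro p hp i j hi hj
        refine harc i j (Or.inr (Or.inr (Or.inl ?_)))
        have hpe : ((i : ℕ) + 1, (j : ℕ) + 1) = p := by rw [hi, hj]
        rwa [hpe]
      · intro i hi
        exact hrayv i (Or.inr hi)
  set G : (Fin (circles a b) → ↥(Metric.sphere (0 : EuclideanSpace ℝ (Fin 3)) 1)) →
      ↥(SComp a ∩ SComp b) :=
    fun y => ⟨fun i => classVal a b (Quot.mk _ i) y, hGmem y⟩ with hG
  have hleft : Function.LeftInverse G F := by
    intro x
    apply Subtype.ext
    funext i
    show classVal a b (Quot.mk _ i) (F x) = x.1 i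
    by_cases h : IsCircleClass a b (Quot.mk (glueRelF a b) i)
    · rw [classVal_circle h]
      show x.1 (Quot.out ((e.symm (e ⟨Quot.mk _ i, h⟩)) :
        {q : Quot (glueRelF a b) // IsCircleClass a b q}).1) = x.1 i
      rw [Equiv.symm_apply_apply]
      exact const_on_class x.2.1 x.2.2 (Quot.out_eq _)
    · rw [classVal_line h]
      obtain ⟨j, hj, hr⟩ := not_circle_exists h
      rw [lineVal_eq hab hj hr, ← hray_val x.1 x.2 j hr]
      exact const_on_class x.2.1 x.2.2 hj
  have hright : Function.RightInverse G F := by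
    intro y
    funext t
    apply Subtype.ext
    show classVal a b (Quot.mk _ (Quot.out ((e.symm t) :
      {q : Quot (glueRelF a b) // IsCircleClass a b q}).1)) y = (y t : EuclideanSpace ℝ (Fin 3))
    rw [Quot.out_eq]
    rw [classVal_circle ((e.symm t).2)]
    congr 1
    have : (⟨((e.symm t) : {q : Quot (glueRelF a b) // IsCircleClass a b q}).1,
        (e.symm t).2⟩ : {q : Quot (glueRelF a b) // IsCircleClass a b q}) = e.symm t := rfl
    rw [this, Equiv.apply_symm_apply]
  have hFc : Continuous F := by
    apply continuous_pi
    intro t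
    apply Continuous.subtype_mk
    exact (continuous_apply _).comp continuous_subtype_val
  have hGc : Continuous G := by
    apply Continuous.subtype_mk
    apply continuous_pi
    intro i
    exact continuous_classVal a b _
  exact ⟨⟨⟨F, G, hleft, hright⟩, hFc, hGc⟩⟩
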